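/- Let M be a normal abelian subgroup of a group G, let m ∈ M and b₁, …, b_k ∈ G with each b_i a δ_{k-1}-value in G (i.e., a value of the derived word δ_{k-1}). Then the iterated commutator [m, b₁, b₂, …, b_k] is a δ_k-value in G. -/

import Mathlib

open scoped commutatorElement

/-- The set of `δ_k`-values in `G`: `δ₀`-values are all elements, and a
`δ_{k+1}`-value is a commutator of two `δ_k`-values. -/
def deltaValues (G : Type*) [Group G] : ℕ → Set G
  | 0 => Set.univ
  | k + 1 => {x | ∃ a ∈ deltaValues G k, ∃ b ∈ deltaValues G k, x = ⁅a, b⁆}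

lemma deltaValues_succ_subset (G : Type*) [Group G] :
    ∀ j, deltaValues G (j + 1) ⊆ deltaValues G j := by
  intro j
  induction j with
  | zero => intro x _; exact Set.mem_univ x
  | succ j ih =>
    rintro x ⟨a, ha, c, hc, rfl⟩
    exact ⟨a, ih ha, c, ih hc, rfl⟩

lemma foldl_mem_deltaValues {G : Type*} [Group G] :
    ∀ (l : List G), l ≠ [] → (∀ x ∈ l, x ∈ deltaValues G (l.length - 1)) →
      ∀ m : G, l.foldl (fun x y => ⁅x, y⁆) m ∈ deltaValues G l.length := by
  intro l
  induction l using List.reverseRecOn with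
  | nil => intro h; exact absurd rfl h
  | append_singleton l a ih =>
    intro _ hmem m
    rw [List.foldl_concat]
    rcases eq_or_ne l [] with rfl | hl
    · simp only [List.length_append, List.length_nil, List.length_cons, Nat.zero_add]
      exact ⟨m, Set.mem_univ m, a, Set.mem_univ a, rfl⟩
    · have hlen : l.length ≥ 1 := List.length_pos_iff.mpr hl
      have hlenconcat : (l ++ [a]).length = l.length + 1 := by simp
      have hmem' : ∀ x ∈ l, x ∈ deltaValues G (l.length - 1) := by
        intro x hx
        have : x ∈ deltaValues G ((l ++ [a]).length - 1) :=
          hmem x (List.mem_append_left _ hx)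
        rw [hlenconcat, Nat.add_sub_cancel] at this
        have := deltaValues_succ_subset G (l.length - 1)
        rw [Nat.sub_add_cancel hlen] at this
        exact this ‹x ∈ deltaValues G l.length›
      have h1 : l.foldl (fun x y => ⁅x, y⁆) m ∈ deltaValues G l.length :=
        ih hl hmem' m
      have h2 : a ∈ deltaValues G l.length := by
        have := hmem a (by simp)
        rwa [hlenconcat, Nat.add_sub_cancel] at this
      rw [hlenconcat]
      exact ⟨_, h1, a, h2, rfl⟩

theorem stmt_8 {G : Type*} [Group G] (M : Subgroup G) [M.Normal]
    (hab : ∀ x ∈ M, ∀ y ∈ M, x * y = y * x)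
    (k : ℕ) (hk : 1 ≤ k) (b : Fin k → G)
    (hb : ∀ i, b i ∈ deltaValues G (k - 1))
    (m : G) (hm : m ∈ M) :
    (List.ofFn b).foldl (fun x y => ⁅x, y⁆) m ∈ deltaValues G k := by
  have hlen : (List.ofFn b).length = k := List.length_ofFn
  have h := foldl_mem_deltaValues (List.ofFn b)
    (by
      intro h
      have := congrArg List.length h
      simp [hlen] at this
      omega)
    (by
      intro x hx
      rw [hlen]
      obtain ⟨i, rfl⟩ := List.mem_ofFn.mp hx
      exact hb i) m
  rwa [hlen] at h
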